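/- arXiv:1210.6129 — 2 statements merged into one kernel-verified Lean document; each statement's English description precedes it below -/
import Mathlib

section
/- Let I be a finite index set and let h = (h_{cc'}) be a matrix indexed by a partially ordered set, lower unitriangular (h_{cc} = 1 and h_{cc'} = 0 unless c' ≤ c) with entries in ℤ[v,v⁻¹], satisfying \bar{h} = h⁻¹ where bar denotes the entrywise involution v ↦ v⁻¹. Then there exists a unique lower unitriangular matrix d = (d_{cc'}) with off-diagonal entries in v⁻¹ℤ[v⁻¹] such that d = \bar{d} h. -/
open LaurentPolynomial
open scoped Classical

/-- The ring `ℤ[v,v⁻¹]` of Laurent polynomials with integer coefficients. -/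
abbrev L : Type := LaurentPolynomial ℤ

/-- The bar involution `v ↦ v⁻¹` applied entrywise to a matrix. -/
noncomputable def barMat {ι : Type*} (m : Matrix ι ι L) : Matrix ι ι L :=
  fun i j => invert (m i j)

/-- A matrix indexed by a poset is lower unitriangular if its diagonal entries are `1`
and the `(c,c')` entry vanishes unless `c' ≤ c`. -/
def Unitri {ι : Type*} [PartialOrder ι] (m : Matrix ι ι L) : Prop :=
  (∀ i, m i i = 1) ∧ ∀ i j, ¬ j ≤ i → m i j = 0

/-- A Laurent polynomial lies in `v⁻¹ℤ[v⁻¹]`, i.e. is supported on negative exponents. -/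
def NegPow (p : L) : Prop := ∀ k : ℤ, 0 ≤ k → p.coeff k = 0

noncomputable def nPart (p : L) : L := AddMonoidAlgebra.ofCoeff (Finsupp.filter (fun k => k < 0) p.coeff)

lemma nPart_apply (p : L) (k : ℤ) : (nPart p).coeff k = if k < 0 then p.coeff k else 0 := by
  show (Finsupp.filter (fun k => k < 0) p.coeff) k = _
  rw [Finsupp.filter_apply]

lemma sub_apply' (p q : L) (k : ℤ) : (p - q).coeff k = p.coeff k - q.coeff k := rfl
lemma neg_apply' (p : L) (k : ℤ) : (-p).coeff k = -(p.coeff k) := rfl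

lemma nPart_negPow (p : L) : NegPow (nPart p) := by
  intro k hk; rw [nPart_apply, if_neg (not_lt.mpr hk)]

lemma nPart_zero : nPart (0 : L) = 0 := by
  ext k; rw [nPart_apply]; split <;> rfl

lemma solve_eq (q : L) (hq : invert q = -q) :
    nPart q - invert (nPart q) = q := by
  ext k
  have hsym : ∀ m : ℤ, q.coeff (-m) = -(q.coeff m) := by
    intro m
    have := congrArg (fun p : L => p.coeff m) hq
    simp only [invert_apply, neg_apply'] at this
    rw [← this]
  rw [sub_apply', invert_apply, nPart_apply, nPart_apply]
  rcases lt_trichotomy k 0 with hk | hk | hk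
  · rw [if_pos hk, if_neg (by omega : ¬ -k < 0)]; ring
  · subst hk
    have h0 : q.coeff 0 = 0 := by have := hsym 0; simp at this; omega
    simp [h0]
  · rw [if_neg (by omega : ¬ k < 0), if_pos (by omega : -k < 0), hsym k]; ring

lemma solve_unique (q p : L) (hneg : NegPow p)
    (heq : p - invert p = q) : p = nPart q := by
  ext k
  rw [nPart_apply]
  rcases lt_or_ge k 0 with hk | hk
  · rw [if_pos hk, ← heq, sub_apply', invert_apply, hneg (-k) (by omega)]; ring
  · rw [if_neg (not_lt.mpr hk), hneg k hk]

lemma gt_induction {ι : Type*} [Finite ι] [PartialOrder ι] {C : ι → Prop}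
    (ind : ∀ x, (∀ y, x < y → C y) → C x) : ∀ x, C x := fun x =>
  (Finite.to_wellFoundedGT.wf).induction x (fun x ih => ind x (fun y hy => ih y hy))

noncomputable def rowAux {ι : Type*} [Fintype ι] [DecidableEq ι] [PartialOrder ι]
    (h : Matrix ι ι L) (c : ι) : ι → L :=
  (Finite.to_wellFoundedGT.wf).fix
    (fun c' rec =>
      if c' = c then 1
      else nPart (∑ e ∈ (Finset.univ.filter (fun e => c' < e)).attach,
        invert (rec e.1 (Finset.mem_filter.mp e.2).2) * h e.1 c'))

lemma rowAux_eq {ι : Type*} [Fintype ι] [DecidableEq ι] [PartialOrder ι]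
    (h : Matrix ι ι L) (c c' : ι) :
    rowAux h c c' = if c' = c then 1
      else nPart (∑ e ∈ Finset.univ.filter (fun e => c' < e),
        invert (rowAux h c e) * h e c') := by
  rw [rowAux, WellFounded.fix_eq]
  congr 1
  exact congrArg nPart (Finset.sum_attach _ (fun e => invert (rowAux h c e) * h e c'))

section Main

variable {ι : Type*} [Fintype ι] [DecidableEq ι] [PartialOrder ι] (h : Matrix ι ι L)

lemma rowAux_diag (c : ι) : rowAux h c c = 1 := by rw [rowAux_eq, if_pos rfl]

lemma rowAux_vanish (c : ι) : ∀ c', ¬ c' ≤ c → rowAux h c c' = 0 := by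
  refine gt_induction (fun x IH hx => ?_)
  rw [rowAux_eq, if_neg (fun hxc => hx (le_of_eq hxc))]
  have hz : ∀ e ∈ Finset.univ.filter (fun e => x < e),
      invert (rowAux h c e) * h e x = 0 := by
    intro e he
    have hxe : x < e := (Finset.mem_filter.mp he).2
    have : ¬ e ≤ c := fun hec => hx (le_trans hxe.le hec)
    rw [IH e hxe this, map_zero, zero_mul]
  rw [Finset.sum_eq_zero hz, nPart_zero]

/-- Splitting a sum `∑ e, p e * w e` where `w e = 0` unless `x ≤ e`. -/
lemma split_sum {ι : Type*} [Fintype ι] [DecidableEq ι] [PartialOrder ι]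
    (x : ι) (p w : ι → L) (hw : ∀ e, ¬ x ≤ e → w e = 0) :
    ∑ e, p e * w e
      = p x * w x + ∑ e ∈ Finset.univ.filter (fun e => x < e), p e * w e := by
  have h1 : ∑ e, p e * w e = ∑ e ∈ Finset.univ.filter (fun e => x ≤ e), p e * w e := by
    refine (Finset.sum_subset (Finset.filter_subset _ _) ?_).symm
    intro e _ he
    rw [hw e (by simpa using he), mul_zero]
  have h2 : Finset.univ.filter (fun e => x ≤ e)
      = insert x (Finset.univ.filter (fun e => x < e)) := by
    ext e
    simp only [Finset.mem_filter, Finset.mem_univ, true_and, Finset.mem_insert]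
    constructor
    · intro hle
      rcases eq_or_lt_of_le hle with hlt | hlt
      · exact Or.inl hlt.symm
      · exact Or.inr hlt
    · rintro (rfl | hlt)
      · exact le_refl _
      · exact hlt.le
  rw [h1, h2, Finset.sum_insert (by simp)]

variable (hUni : Unitri h) (hBar : barMat h * h = 1)

include hUni hBar in
lemma rowAux_eqn (c : ι) :
    ∀ x, rowAux h c x = ∑ e, invert (rowAux h c e) * h e x := by
  have hBar' : h * barMat h = 1 := mul_eq_one_comm.mp hBar
  refine gt_induction (fun x IH => ?_)
  by_cases hx : x = c
  · subst hx
    rw [rowAux_diag]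
    symm
    rw [Finset.sum_eq_single x]
    · rw [rowAux_diag, map_one, hUni.1 x, one_mul]
    · intro b _ hb
      by_cases hbx : x ≤ b
      · rw [rowAux_vanish h x b (fun hbx' => hb (le_antisymm hbx' hbx)), map_zero, zero_mul]
      · rw [hUni.2 b x hbx, mul_zero]
    · intro hmem; exact absurd (Finset.mem_univ x) hmem
  · set d := rowAux h c with hd
    set S := Finset.univ.filter (fun e => x < e) with hS
    set q := ∑ e ∈ S, invert (d e) * h e x with hqdef
    have hsplit : ∀ p : ι → L,
        ∑ e, p e * h e x = p x * h x x + ∑ e ∈ S, p e * h e x :=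
      fun p => split_sum x p (fun e => h e x) (fun e he => by show h e x = 0; exact hUni.2 e x he)
    have hq : invert q = -q := by
      have step1 : invert q = ∑ e ∈ S, d e * invert (h e x) := by
        rw [hqdef, map_sum]
        refine Finset.sum_congr rfl (fun e _ => ?_)
        rw [map_mul, involutive_invert (d e)]
      have step2 : ∀ e ∈ S, d e = ∑ f, invert (d f) * h f e := by
        intro e he
        exact IH e (Finset.mem_filter.mp he).2
      have step3 : invert q
          = ∑ f, invert (d f) * (∑ e ∈ S, h f e * invert (h e x)) := by
        rw [step1, Finset.sum_congr rfl (fun e he => by rw [step2 e he])]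
        simp only [Finset.sum_mul, Finset.mul_sum]
        rw [Finset.sum_comm]
        exact Finset.sum_congr rfl (fun f _ => Finset.sum_congr rfl (fun e _ => by ring))
      have inner : ∀ f, ∑ e ∈ S, h f e * invert (h e x)
          = (1 : Matrix ι ι L) f x - h f x := by
        intro f
        have hsp : ∑ e, h f e * invert (h e x)
            = h f x * invert (h x x) + ∑ e ∈ S, h f e * invert (h e x) :=
          split_sum x (fun e => h f e) (fun e => invert (h e x))
            (fun e he => by show invert (h e x) = 0; rw [hUni.2 e x he, map_zero])
        have huniv : ∑ e, h f e * invert (h e x) = (1 : Matrix ι ι L) f x := by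
          rw [← hBar', Matrix.mul_apply]; rfl
        rw [huniv, hUni.1 x, map_one, mul_one] at hsp
        linear_combination -hsp
      rw [step3, Finset.sum_congr rfl (fun f _ => by rw [inner f])]
      have expand : ∑ f, invert (d f) * ((1 : Matrix ι ι L) f x - h f x)
          = (∑ f, invert (d f) * (1 : Matrix ι ι L) f x) - ∑ f, invert (d f) * h f x := by
        rw [← Finset.sum_sub_distrib]
        exact Finset.sum_congr rfl (fun f _ => by ring)
      rw [expand]
      have hdelta : ∑ f, invert (d f) * (1 : Matrix ι ι L) f x = invert (d x) := by
        rw [Finset.sum_eq_single x]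
        · rw [Matrix.one_apply_eq, mul_one]
        · intro b _ hb; rw [Matrix.one_apply_ne hb, mul_zero]
        · intro hmem; exact absurd (Finset.mem_univ x) hmem
      rw [hdelta, hsplit (fun f => invert (d f)), hUni.1 x, mul_one]
      ring
    have hdx : d x = nPart q := by
      rw [hd, rowAux_eq, if_neg hx]
    rw [hsplit (fun e => invert (d e)), hUni.1 x, mul_one, hdx]
    have hse := solve_eq q hq
    linear_combination hse

end Main

/-- Given a lower unitriangular matrix `h` over `ℤ[v,v⁻¹]` indexed by a finite poset,
with `h̄ = h⁻¹`, there is a unique lower unitriangular matrix `d` with off-diagonal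
entries in `v⁻¹ℤ[v⁻¹]` such that `d = d̄ h`. -/
theorem exists_unique_bar_invariant_matrix {ι : Type*} [Fintype ι] [DecidableEq ι] [PartialOrder ι]
    (h : Matrix ι ι L) (hUni : Unitri h) (hBar : barMat h * h = 1) :
    ∃! d : Matrix ι ι L,
      Unitri d ∧ (∀ i j, i ≠ j → NegPow (d i j)) ∧ d = barMat d * h := by
  refine ⟨(fun c c' => rowAux h c c' : Matrix ι ι L), ⟨⟨fun i => rowAux_diag h i,
    fun i j hij => rowAux_vanish h i j hij⟩, ?_, ?_⟩, ?_⟩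
  · intro i j hij
    rw [show (fun c c' => rowAux h c c' : Matrix ι ι L) i j = rowAux h i j from rfl,
      rowAux_eq, if_neg (fun e => hij e.symm)]
    exact nPart_negPow _
  · funext i j
    show rowAux h i j = ∑ e, invert (rowAux h i e) * h e j
    exact rowAux_eqn h hUni hBar i j
  · rintro d' ⟨⟨hdiag, hvan⟩, hnegp, heqm⟩
    have key : ∀ c, ∀ x, d' c x = rowAux h c x := by
      intro c
      refine gt_induction (fun x IH => ?_)
      by_cases hx : x = c
      · subst hx
        rw [hdiag, rowAux_diag]
      · have heq1 : d' c x = ∑ e, invert (d' c e) * h e x := by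
          conv_lhs => rw [heqm]
          rw [Matrix.mul_apply]
          rfl
        have hsplit : ∑ e, invert (d' c e) * h e x
            = invert (d' c x) * h x x
              + ∑ e ∈ Finset.univ.filter (fun e => x < e), invert (d' c e) * h e x :=
          split_sum x (fun e => invert (d' c e)) (fun e => h e x)
            (fun e he => by show h e x = 0; exact hUni.2 e x he)
        set q := ∑ e ∈ Finset.univ.filter (fun e => x < e),
          invert (rowAux h c e) * h e x with hqdef
        have hqq : ∑ e ∈ Finset.univ.filter (fun e => x < e), invert (d' c e) * h e x
            = q := by
          refine Finset.sum_congr rfl (fun e he => ?_)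
          rw [IH e (Finset.mem_filter.mp he).2]
        have hfin : d' c x - invert (d' c x) = q := by
          rw [hsplit, hqq, hUni.1 x, mul_one] at heq1
          linear_combination heq1
        have := solve_unique q (d' c x) (hnegp c x (fun e => hx e.symm)) hfin
        rw [this, rowAux_eq, if_neg hx]
    funext c x
    exact key c x
end

section
/- The twisted Ringel–Hall algebra multiplication is associative: for modules over a finite-dimensional hereditary algebra Λ over a finite field with q elements, the product u_[M] * u_[N] = v_q^{⟨dim M, dim N⟩} Σ_[L] g^L_{MN} u_[L] on the free ℚ(v_q)-module with basis the isomorphism classes of finite-dimensional Λ-modules is associative with unit u_[0]. -/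
open scoped BigOperators

/-- The twisted Ringel–Hall multiplication on the free module with basis the set `M` of
isomorphism classes of modules: `u_A * u_B = v_q^{⟨dim A, dim B⟩} Σ_L g^L_{AB} u_L`,
extended bilinearly. Here `dim` is the class in the Grothendieck group `G`, `e` is the
Euler form and `hall L A B = g^L_{AB}`. -/
noncomputable def hallMul {K M G : Type*} [Field K] [AddCommGroup G]
    (vq : Kˣ) (dim : M → G) (e : G → G → ℤ) (hall : M → M → M → ℕ)
    (f g : M →₀ K) : M →₀ K :=
  f.sum fun A a => g.sum fun B b =>
    (a * b) • (((vq ^ e (dim A) (dim B) : Kˣ) : K) •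
      ∑ᶠ L, (hall L A B : K) • Finsupp.single L (1 : K))

section Aux

variable {K M G : Type*} [Field K] [AddCommGroup G]
variable (vq : Kˣ) (dim : M → G) (e : G → G → ℤ) (hall : M → M → M → ℕ)

lemma hallMul_single_single (A B : M) (a b : K) :
    hallMul vq dim e hall (Finsupp.single A a) (Finsupp.single B b) =
      (a * b) • (((vq ^ e (dim A) (dim B) : Kˣ) : K) •
        ∑ᶠ L, (hall L A B : K) • Finsupp.single L (1 : K)) := by
  unfold hallMul
  rw [Finsupp.sum_single_index (by simp), Finsupp.sum_single_index (by simp)]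

lemma hallMul_zero_left (g : M →₀ K) : hallMul vq dim e hall 0 g = 0 := by
  unfold hallMul; simp

lemma hallMul_zero_right (f : M →₀ K) : hallMul vq dim e hall f 0 = 0 := by
  unfold hallMul; simp

lemma hallMul_add_left (f f' g : M →₀ K) :
    hallMul vq dim e hall (f + f') g =
      hallMul vq dim e hall f g + hallMul vq dim e hall f' g := by
  unfold hallMul
  refine Finsupp.sum_add_index' (fun A => by simp) (fun A a a' => ?_)
  rw [← Finsupp.sum_add]
  exact Finsupp.sum_congr fun B _ => by rw [add_mul, add_smul]

lemma hallMul_add_right (f g g' : M →₀ K) :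
    hallMul vq dim e hall f (g + g') =
      hallMul vq dim e hall f g + hallMul vq dim e hall f g' := by
  unfold hallMul
  rw [← Finsupp.sum_add]
  refine Finsupp.sum_congr fun A _ => ?_
  exact Finsupp.sum_add_index' (fun B => by simp) (fun B b b' => by rw [mul_add, add_smul])

lemma hallMul_smul_left (c : K) (f g : M →₀ K) :
    hallMul vq dim e hall (c • f) g = c • hallMul vq dim e hall f g := by
  unfold hallMul
  rw [Finsupp.sum_smul_index (fun A => by simp), Finsupp.smul_sum]
  refine Finsupp.sum_congr fun A _ => ?_
  rw [Finsupp.smul_sum]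
  refine Finsupp.sum_congr fun B _ => ?_
  simp only [smul_smul]
  congr 1
  ring

lemma hallMul_smul_right (c : K) (f g : M →₀ K) :
    hallMul vq dim e hall f (c • g) = c • hallMul vq dim e hall f g := by
  unfold hallMul
  rw [Finsupp.smul_sum]
  refine Finsupp.sum_congr fun A _ => ?_
  rw [Finsupp.sum_smul_index (fun B => by simp), Finsupp.smul_sum]
  refine Finsupp.sum_congr fun B _ => ?_
  simp only [smul_smul]
  congr 1
  ring

lemma hallMul_finset_sum_left {ι : Type*} (s : Finset ι) (t : ι → (M →₀ K)) (g : M →₀ K) :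
    hallMul vq dim e hall (∑ i ∈ s, t i) g = ∑ i ∈ s, hallMul vq dim e hall (t i) g := by
  classical
  induction s using Finset.induction with
  | empty => simp [hallMul_zero_left]
  | @insert a s h ih =>
      rw [Finset.sum_insert h, hallMul_add_left, ih, Finset.sum_insert h]

lemma hallMul_finset_sum_right {ι : Type*} (s : Finset ι) (t : ι → (M →₀ K)) (f : M →₀ K) :
    hallMul vq dim e hall f (∑ i ∈ s, t i) = ∑ i ∈ s, hallMul vq dim e hall f (t i) := by
  classical
  induction s using Finset.induction with
  | empty => simp [hallMul_zero_right]
  | @insert a s h ih =>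
      rw [Finset.sum_insert h, hallMul_add_right, ih, Finset.sum_insert h]

lemma hallS_eq_finset_sum (A B : M) (hfinAB : (Function.support fun L => hall L A B).Finite) :
    (∑ᶠ L, (hall L A B : K) • Finsupp.single L (1 : K)) =
      ∑ L ∈ hfinAB.toFinset, (hall L A B : K) • Finsupp.single L (1 : K) := by
  apply finsum_eq_finset_sum_of_support_subset
  intro L hL
  simp only [Function.mem_support] at hL
  simp only [Finset.coe_sort_coe, Set.Finite.coe_toFinset, Function.mem_support]
  intro h0
  exact hL (by rw [h0]; simp)

lemma hallS_apply [DecidableEq M] (A B X : M)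
    (hfinAB : (Function.support fun L => hall L A B).Finite) :
    (∑ᶠ L, (hall L A B : K) • Finsupp.single L (1 : K)) X = (hall X A B : K) := by
  rw [hallS_eq_finset_sum (hall := hall) A B hfinAB, Finset.sum_apply']
  simp only [Finsupp.smul_apply, Finsupp.single_apply, smul_eq_mul, mul_ite, mul_one, mul_zero]
  rw [Finset.sum_ite_eq' hfinAB.toFinset X fun L => (hall L A B : K)]
  split
  · rfl
  · next hX =>
      have : hall X A B = 0 := by
        by_contra h
        exact hX (hfinAB.mem_toFinset.mpr h)
      simp [this]

end Aux

lemma hall_key {K M G : Type*} [Field K] [AddCommGroup G] [DecidableEq M]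
    (vq : Kˣ) (dim : M → G) (e : G → G → ℤ) (hall : M → M → M → ℕ)
    (hfin : ∀ A B, (Function.support fun L => hall L A B).Finite)
    (hdim : ∀ L A B, hall L A B ≠ 0 → dim L = dim A + dim B)
    (heL : ∀ x y z : G, e (x + y) z = e x z + e y z)
    (heR : ∀ x y z : G, e x (y + z) = e x y + e x z)
    (hried : ∀ L A B C, (∑ᶠ X, hall X A B * hall L X C) = ∑ᶠ Y, hall Y B C * hall L A Y)
    (A B C : M) (a b c : K) :
    hallMul vq dim e hall
        (hallMul vq dim e hall (Finsupp.single A a) (Finsupp.single B b)) (Finsupp.single C c)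
      = hallMul vq dim e hall (Finsupp.single A a)
        (hallMul vq dim e hall (Finsupp.single B b) (Finsupp.single C c)) := by
  have hVadd : ∀ m n : ℤ, ((vq ^ (m + n) : Kˣ) : K) = ((vq ^ m : Kˣ) : K) * ((vq ^ n : Kˣ) : K) := by
    intro m n; rw [zpow_add]; exact Units.val_mul _ _
  have key_nat : ∀ X, (∑ L ∈ (hfin A B).toFinset, hall L A B * hall X L C)
      = ∑ Y ∈ (hfin B C).toFinset, hall Y B C * hall X A Y := by
    intro X
    have h1 : (∑ᶠ Z, hall Z A B * hall X Z C)
        = ∑ L ∈ (hfin A B).toFinset, hall L A B * hall X L C := by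
      apply finsum_eq_finset_sum_of_support_subset
      intro L hL
      simp only [Function.mem_support] at hL
      simp only [Finset.coe_sort_coe, Set.Finite.coe_toFinset, Function.mem_support]
      intro h0; exact hL (by rw [h0, zero_mul])
    have h2 : (∑ᶠ Z, hall Z B C * hall X A Z)
        = ∑ Y ∈ (hfin B C).toFinset, hall Y B C * hall X A Y := by
      apply finsum_eq_finset_sum_of_support_subset
      intro L hL
      simp only [Function.mem_support] at hL
      simp only [Finset.coe_sort_coe, Set.Finite.coe_toFinset, Function.mem_support]
      intro h0; exact hL (by rw [h0, zero_mul])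
    rw [← h1, ← h2, hried X A B C]
  have hTU : (∑ L ∈ (hfin A B).toFinset,
        (hall L A B : K) • (∑ᶠ Z, (hall Z L C : K) • Finsupp.single Z (1 : K)))
      = ∑ Y ∈ (hfin B C).toFinset,
        (hall Y B C : K) • (∑ᶠ Z, (hall Z A Y : K) • Finsupp.single Z (1 : K)) := by
    ext X
    rw [Finset.sum_apply', Finset.sum_apply']
    have e1 : ∀ L ∈ (hfin A B).toFinset,
        ((hall L A B : K) • (∑ᶠ Z, (hall Z L C : K) • Finsupp.single Z (1 : K))) X
          = ((hall L A B * hall X L C : ℕ) : K) := by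
      intro L _
      rw [Finsupp.smul_apply, hallS_apply hall L C X (hfin L C), smul_eq_mul]
      push_cast; ring
    have e2 : ∀ Y ∈ (hfin B C).toFinset,
        ((hall Y B C : K) • (∑ᶠ Z, (hall Z A Y : K) • Finsupp.single Z (1 : K))) X
          = ((hall Y B C * hall X A Y : ℕ) : K) := by
      intro Y _
      rw [Finsupp.smul_apply, hallS_apply hall A Y X (hfin A Y), smul_eq_mul]
      push_cast; ring
    rw [Finset.sum_congr rfl e1, Finset.sum_congr rfl e2, ← Nat.cast_sum, ← Nat.cast_sum,
      key_nat X]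
  have hLHS : hallMul vq dim e hall
      (hallMul vq dim e hall (Finsupp.single A a) (Finsupp.single B b)) (Finsupp.single C c)
      = (a * b * c * (((vq ^ e (dim A) (dim B) : Kˣ) : K) *
          ((vq ^ e (dim A) (dim C) : Kˣ) : K) * ((vq ^ e (dim B) (dim C) : Kˣ) : K))) •
        ∑ L ∈ (hfin A B).toFinset,
          (hall L A B : K) • (∑ᶠ Z, (hall Z L C : K) • Finsupp.single Z (1 : K)) := by
    rw [hallMul_single_single, hallMul_smul_left, hallMul_smul_left,
      hallS_eq_finset_sum hall A B (hfin A B), hallMul_finset_sum_left]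
    have hterm : ∀ L ∈ (hfin A B).toFinset,
        hallMul vq dim e hall ((hall L A B : K) • Finsupp.single L (1 : K))
            (Finsupp.single C c)
          = (c * (((vq ^ e (dim A) (dim C) : Kˣ) : K) * ((vq ^ e (dim B) (dim C) : Kˣ) : K))) •
            ((hall L A B : K) • (∑ᶠ Z, (hall Z L C : K) • Finsupp.single Z (1 : K))) := by
      intro L hL
      have hd : dim L = dim A + dim B :=
        hdim L A B (Function.mem_support.mp ((hfin A B).mem_toFinset.mp hL))
      rw [hallMul_smul_left, hallMul_single_single, hd, heL, hVadd]
      simp only [smul_smul]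
      congr 1
      ring
    rw [Finset.sum_congr rfl hterm, ← Finset.smul_sum]
    simp only [smul_smul]
    congr 1
    ring
  have hRHS : hallMul vq dim e hall (Finsupp.single A a)
      (hallMul vq dim e hall (Finsupp.single B b) (Finsupp.single C c))
      = (a * b * c * (((vq ^ e (dim A) (dim B) : Kˣ) : K) *
          ((vq ^ e (dim A) (dim C) : Kˣ) : K) * ((vq ^ e (dim B) (dim C) : Kˣ) : K))) •
        ∑ Y ∈ (hfin B C).toFinset,
          (hall Y B C : K) • (∑ᶠ Z, (hall Z A Y : K) • Finsupp.single Z (1 : K)) := by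
    rw [hallMul_single_single, hallMul_smul_right, hallMul_smul_right,
      hallS_eq_finset_sum hall B C (hfin B C), hallMul_finset_sum_right]
    have hterm : ∀ Y ∈ (hfin B C).toFinset,
        hallMul vq dim e hall (Finsupp.single A a)
            ((hall Y B C : K) • Finsupp.single Y (1 : K))
          = (a * (((vq ^ e (dim A) (dim B) : Kˣ) : K) * ((vq ^ e (dim A) (dim C) : Kˣ) : K))) •
            ((hall Y B C : K) • (∑ᶠ Z, (hall Z A Y : K) • Finsupp.single Z (1 : K))) := by
      intro Y hY
      have hd : dim Y = dim B + dim C :=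
        hdim Y B C (Function.mem_support.mp ((hfin B C).mem_toFinset.mp hY))
      rw [hallMul_smul_right, hallMul_single_single, hd, heR, hVadd]
      simp only [smul_smul]
      congr 1
      ring
    rw [Finset.sum_congr rfl hterm, ← Finset.smul_sum]
    simp only [smul_smul]
    congr 1
    ring
  rw [hLHS, hRHS, hTU]

/-- The twisted Ringel–Hall algebra is an associative algebra with unit `u_[0]`:
assuming the standard properties of Hall numbers — finite support, additivity of the
class in the Grothendieck group on extensions, biadditivity of the Euler form,
Riedtmann's associativity of the untwisted Hall numbers, and the behaviour of the zero
module `O` — the twisted multiplication is associative with unit `u_O`. -/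
theorem hallMul_assoc_and_unital {K M G : Type*} [Field K] [AddCommGroup G] [DecidableEq M]
    (vq : Kˣ) (dim : M → G) (e : G → G → ℤ) (hall : M → M → M → ℕ)
    (hfin : ∀ A B, (Function.support fun L => hall L A B).Finite)
    (hdim : ∀ L A B, hall L A B ≠ 0 → dim L = dim A + dim B)
    (heL : ∀ x y z : G, e (x + y) z = e x z + e y z)
    (heR : ∀ x y z : G, e x (y + z) = e x y + e x z)
    (hried : ∀ L A B C, (∑ᶠ X, hall X A B * hall L X C) = ∑ᶠ Y, hall Y B C * hall L A Y)
    (O : M) (hO : dim O = 0)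
    (hOl : ∀ L N, hall L O N = if L = N then 1 else 0)
    (hOr : ∀ L N, hall L N O = if L = N then 1 else 0) :
    (∀ f g h : M →₀ K,
        hallMul vq dim e hall (hallMul vq dim e hall f g) h =
          hallMul vq dim e hall f (hallMul vq dim e hall g h)) ∧
      (∀ f : M →₀ K, hallMul vq dim e hall (Finsupp.single O 1) f = f) ∧
      (∀ f : M →₀ K, hallMul vq dim e hall f (Finsupp.single O 1) = f) := by
  refine ⟨?_, ?_, ?_⟩
  · intro f g h
    induction f using Finsupp.induction_linear with
    | zero => simp [hallMul_zero_left]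
    | add f f' hf hf' =>
        rw [hallMul_add_left, hallMul_add_left, hf, hf', hallMul_add_left]
    | single A a =>
      induction g using Finsupp.induction_linear with
      | zero => simp [hallMul_zero_left, hallMul_zero_right]
      | add g g' hg hg' =>
          rw [hallMul_add_right, hallMul_add_left, hg, hg', hallMul_add_left,
            hallMul_add_right]
      | single B b =>
        induction h using Finsupp.induction_linear with
        | zero => simp [hallMul_zero_right]
        | add h h' hh hh' =>
            rw [hallMul_add_right, hh, hh', hallMul_add_right, hallMul_add_right]
        | single C c => exact hall_key vq dim e hall hfin hdim heL heR hried A B C a b c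
  · intro f
    have he0 : ∀ x, e 0 x = 0 := fun x => by
      have h := heL 0 0 x; rw [add_zero] at h; omega
    have hSO : ∀ B : M, (∑ᶠ L, (hall L O B : K) • Finsupp.single L (1 : K))
        = Finsupp.single B (1 : K) := by
      intro B
      rw [finsum_eq_single _ B (fun L hL => by simp [hOl, hL])]
      simp [hOl]
    unfold hallMul
    rw [Finsupp.sum_single_index (by simp)]
    conv_rhs => rw [← Finsupp.sum_single f]
    refine Finsupp.sum_congr fun B _ => ?_
    rw [hO, he0, one_mul, zpow_zero, Units.val_one, one_smul, hSO, Finsupp.smul_single,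
      smul_eq_mul, mul_one]
  · intro f
    have he0 : ∀ x, e x 0 = 0 := fun x => by
      have h := heR x 0 0; rw [add_zero] at h; omega
    have hSO : ∀ A : M, (∑ᶠ L, (hall L A O : K) • Finsupp.single L (1 : K))
        = Finsupp.single A (1 : K) := by
      intro A
      rw [finsum_eq_single _ A (fun L hL => by simp [hOr, hL])]
      simp [hOr]
    unfold hallMul
    conv_rhs => rw [← Finsupp.sum_single f]
    refine Finsupp.sum_congr fun A _ => ?_
    rw [Finsupp.sum_single_index (by simp)]
    rw [hO, he0, mul_one, zpow_zero, Units.val_one, one_smul, hSO, Finsupp.smul_single,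
      smul_eq_mul, mul_one]
end
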